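/- In the abstract Signorini-problem setting below, the solution u of the gradient scheme satisfies, for every v_D ∈ K_D, the function error estimate ‖Π u − ū‖_{L²(μ)} ≤ C_D sqrt( (2/λ̲) G_D(ū, v_D)⁺ ) + (1/λ̲) [ C_D W + (C_D λ̄ + λ̲) S_D(ū, v_D) ], where C_D = max_{v ∈ X, v ≠ 0} (‖Π v‖_{L²(μ)} + ‖T v‖_{L²(ν)}) / ‖∇_D v‖_{L²(μ;ℝ^d)} is the coercivity constant. (Estimate (2.8) of Theorem 2.4, in the L²-boundary setting.) -/

import Mathlib

open MeasureTheory

set_option maxHeartbeats 2000000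
set_option synthInstance.maxHeartbeats 400000

section AuxLemmas

lemma aux_norm_toLp {α : Type*} [MeasurableSpace α] {μ : Measure α}
    {E : Type*} [NormedAddCommGroup E] (f : Lp E 2 μ) :
    ‖(MemLp.toLp (fun x => ‖f x‖) ((Lp.memLp f).norm))‖ = ‖f‖ := by
  rw [Lp.norm_toLp, Lp.norm_def, eLpNorm_norm]

lemma aux_holder {α : Type*} [MeasurableSpace α] {μ : Measure α}
    {E F : Type*} [NormedAddCommGroup E] [NormedAddCommGroup F]
    (f : Lp E 2 μ) (g : Lp F 2 μ) :
    Integrable (fun x => ‖f x‖ * ‖g x‖) μ ∧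
      ∫ x, ‖f x‖ * ‖g x‖ ∂μ ≤ ‖f‖ * ‖g‖ := by
  set fn := MemLp.toLp (fun x => ‖f x‖) ((Lp.memLp f).norm) with hfn
  set gn := MemLp.toLp (fun x => ‖g x‖) ((Lp.memLp g).norm) with hgn
  have hfe : (fun x => ‖f x‖) =ᵐ[μ] fn := (MemLp.coeFn_toLp _).symm
  have hge : (fun x => ‖g x‖) =ᵐ[μ] gn := (MemLp.coeFn_toLp _).symm
  have hprod : (fun x => ‖f x‖ * ‖g x‖) =ᵐ[μ] fun x => fn x * gn x := by
    filter_upwards [hfe, hge] with x h1 h2; rw [h1, h2]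
  have hint : Integrable (fun x => (fn : α → ℝ) x * gn x) μ := by
    simpa [RCLike.inner_apply] using L2.integrable_inner (𝕜 := ℝ) gn fn
  have hI : Integrable (fun x => ‖f x‖ * ‖g x‖) μ := hint.congr hprod.symm
  refine ⟨hI, ?_⟩
  have h1 : ∫ x, ‖f x‖ * ‖g x‖ ∂μ = (inner ℝ fn gn : ℝ) := by
    rw [L2.inner_def, integral_congr_ae hprod]
    apply integral_congr_ae
    filter_upwards with x
    simp [RCLike.inner_apply]
    ring
  rw [h1]
  calc (inner ℝ fn gn : ℝ) ≤ ‖fn‖ * ‖gn‖ := real_inner_le_norm fn gn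
    _ = ‖f‖ * ‖g‖ := by rw [hfn, hgn, aux_norm_toLp, aux_norm_toLp]

lemma aux_normsq {α : Type*} [MeasurableSpace α] {μ : Measure α}
    {E : Type*} [NormedAddCommGroup E] [InnerProductSpace ℝ E] (f : Lp E 2 μ) :
    ∫ x, ‖f x‖^2 ∂μ = ‖f‖^2 := by
  have := L2.inner_def (𝕜 := ℝ) f f
  rw [real_inner_self_eq_norm_sq] at this
  rw [this]
  apply integral_congr_ae
  filter_upwards with x using (real_inner_self_eq_norm_sq _).symm

lemma aux_mulint {α : Type*} [MeasurableSpace α] {μ : Measure α} (f g : Lp ℝ 2 μ) :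
    Integrable (fun x => f x * g x) μ := by
  simpa [RCLike.inner_apply] using L2.integrable_inner (𝕜 := ℝ) g f

lemma aux_mulbound {α : Type*} [MeasurableSpace α] {μ : Measure α} (f g : Lp ℝ 2 μ) :
    |∫ x, f x * g x ∂μ| ≤ ‖f‖ * ‖g‖ := by
  refine le_trans (by simpa [Real.norm_eq_abs] using
    norm_integral_le_integral_norm (μ := μ) (fun x => f x * g x)) ?_
  simpa [Real.norm_eq_abs] using (aux_holder f g).2

lemma aux_meas {Ωt : Type*} [MeasurableSpace Ωt] {μ : Measure Ωt} {d : ℕ}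
    (Λ : Ωt → Matrix (Fin d) (Fin d) ℝ)
    (hΛm : Measurable fun x i j => Λ x i j)
    (F Z : Lp (EuclideanSpace ℝ (Fin d)) 2 μ) :
    AEStronglyMeasurable
      (fun x => (inner ℝ (Matrix.toEuclideanLin (Λ x) (F x)) (Z x) : ℝ)) μ := by
  have hexp : (fun x => (inner ℝ (Matrix.toEuclideanLin (Λ x) (F x)) (Z x) : ℝ))
      = fun x => ∑ i, (∑ j, Λ x i j * F x j) * Z x i := by
    funext x
    simp [Matrix.toEuclideanLin_apply, PiLp.inner_apply, RCLike.inner_apply,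
      Matrix.mulVec, dotProduct]
    exact Finset.sum_congr rfl fun _ _ => mul_comm _ _
  rw [hexp, aestronglyMeasurable_iff_aemeasurable]
  have hF : ∀ j, AEMeasurable (fun x => F x j) μ := by
    intro j
    exact ((EuclideanSpace.proj (𝕜 := ℝ) j).continuous.comp_aestronglyMeasurable
      (Lp.aestronglyMeasurable F)).aemeasurable
  have hZ : ∀ i, AEMeasurable (fun x => Z x i) μ := by
    intro i
    exact ((EuclideanSpace.proj (𝕜 := ℝ) i).continuous.comp_aestronglyMeasurable
      (Lp.aestronglyMeasurable Z)).aemeasurable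
  have hΛij : ∀ i j, AEMeasurable (fun x => Λ x i j) μ := by
    intro i j
    exact ((measurable_pi_apply j).comp ((measurable_pi_apply i).comp hΛm)).aemeasurable
  exact Finset.aemeasurable_fun_sum _ fun i _ =>
    (Finset.aemeasurable_fun_sum _ fun j _ => (hΛij i j).mul (hF j)).mul (hZ i)

lemma aux_int {Ωt : Type*} [MeasurableSpace Ωt] {μ : Measure Ωt} {d : ℕ}
    {Λ : Ωt → Matrix (Fin d) (Fin d) ℝ}
    (hΛm : Measurable fun x i j => Λ x i j) {c : ℝ}
    (hb : ∀ᵐ x ∂μ, ∀ ξ η : EuclideanSpace ℝ (Fin d),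
      |(inner ℝ (Matrix.toEuclideanLin (Λ x) ξ) η : ℝ)| ≤ c * ‖ξ‖ * ‖η‖)
    (F Z : Lp (EuclideanSpace ℝ (Fin d)) 2 μ) :
    Integrable (fun x => (inner ℝ (Matrix.toEuclideanLin (Λ x) (F x)) (Z x) : ℝ)) μ := by
  refine Integrable.mono' ((aux_holder F Z).1.const_mul c) (aux_meas Λ hΛm F Z) ?_
  filter_upwards [hb] with x hx
  calc ‖(inner ℝ (Matrix.toEuclideanLin (Λ x) (F x)) (Z x) : ℝ)‖
      = |(inner ℝ (Matrix.toEuclideanLin (Λ x) (F x)) (Z x) : ℝ)| := rfl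
    _ ≤ c * ‖F x‖ * ‖Z x‖ := hx _ _
    _ = c * (‖F x‖ * ‖Z x‖) := mul_assoc _ _ _

lemma aux_cs {E : Type*} [NormedAddCommGroup E] [InnerProductSpace ℝ E]
    (L : E →ₗ[ℝ] E) (hsym : ∀ x y : E, (inner ℝ (L x) y : ℝ) = inner ℝ x (L y))
    {hi : ℝ} (hhi0 : 0 ≤ hi)
    (h0 : ∀ x : E, (0:ℝ) ≤ inner ℝ (L x) x)
    (hhi : ∀ x : E, (inner ℝ (L x) x : ℝ) ≤ hi * ‖x‖^2)
    (ξ η : E) : |(inner ℝ (L ξ) η : ℝ)| ≤ hi * ‖ξ‖ * ‖η‖ := by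
  have hq : ∀ t : ℝ, 0 ≤ (inner ℝ (L η) η : ℝ) * (t * t)
      + (2 * (inner ℝ (L ξ) η : ℝ)) * t + (inner ℝ (L ξ) ξ : ℝ) := by
    intro t
    have h := h0 (ξ + t • η)
    have e1 : (inner ℝ (L (ξ + t • η)) (ξ + t • η) : ℝ)
        = (inner ℝ (L η) η : ℝ) * (t * t) + (2 * (inner ℝ (L ξ) η : ℝ)) * t
          + (inner ℝ (L ξ) ξ : ℝ) := by
      have hc : (inner ℝ (L η) ξ : ℝ) = inner ℝ (L ξ) η := by
        rw [hsym η ξ, real_inner_comm]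
      simp [_root_.map_add, _root_.map_smul, inner_add_add_self, inner_add_left,
        inner_add_right, inner_smul_left, inner_smul_right, hc]
      ring
    linarith [e1 ▸ h]
  have hd := discrim_le_zero hq
  rw [discrim] at hd
  have h1 : (inner ℝ (L ξ) η : ℝ)^2 ≤ (inner ℝ (L η) η : ℝ) * (inner ℝ (L ξ) ξ : ℝ) := by nlinarith
  have h2 : (inner ℝ (L η) η : ℝ) * (inner ℝ (L ξ) ξ : ℝ) ≤ (hi*‖ξ‖*‖η‖)^2 := by
    have := hhi ξ; have := hhi η; have := h0 ξ; have := h0 η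
    have hn1 : (0:ℝ) ≤ hi * ‖ξ‖^2 := by positivity
    have hn2 : (0:ℝ) ≤ hi * ‖η‖^2 := by positivity
    nlinarith [sq_nonneg ‖ξ‖, sq_nonneg ‖η‖]
  have hR : (0:ℝ) ≤ hi*‖ξ‖*‖η‖ := by positivity
  have := h1.trans h2
  exact abs_le.mpr ⟨by nlinarith, by nlinarith⟩

lemma aux_symm {d : ℕ} {A : Matrix (Fin d) (Fin d) ℝ} (h : A.IsSymm) :
    (Matrix.toEuclideanLin A).IsSymmetric := by
  apply Matrix.isHermitian_iff_isSymmetric.mp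
  ext i j
  simp [Matrix.conjTranspose_apply]
  exact (congrFun (congrFun h j) i).symm

end AuxLemmas

/-- **Estimate (2.8) of Theorem 2.4** (Signorini problem, `L²`-boundary setting,
function error estimate): for every `v_D ∈ K_D`, the gradient-scheme solution `u`
satisfies `‖Π u - ū‖ ≤ C_D sqrt((2/λ̲) G_D(ū,v_D)⁺) + (1/λ̲)[C_D W + (C_D λ̄ + λ̲) S_D(ū,v_D)]`
where `C_D = max_{v ≠ 0} (‖Π v‖ + ‖T v‖)/‖∇_D v‖` is the coercivity constant. -/
theorem signorini_gradient_scheme_function_error_estimate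
    {Ω : Type*} [MeasurableSpace Ω] (μ : Measure Ω)
    {B : Type*} [MeasurableSpace B] (ν : Measure B)
    (Γ₁ Γ₂ Γ₃ : Set B)
    (hΓmeas : MeasurableSet Γ₁ ∧ MeasurableSet Γ₂ ∧ MeasurableSet Γ₃)
    (hΓunion : Γ₁ ∪ Γ₂ ∪ Γ₃ = Set.univ)
    (hΓdisj : Disjoint Γ₁ Γ₂ ∧ Disjoint Γ₁ Γ₃ ∧ Disjoint Γ₂ Γ₃)
    (d : ℕ) (hd : 1 ≤ d)
    (X : Type*) [AddCommGroup X] [Module ℝ X] [FiniteDimensional ℝ X] [Nontrivial X]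
    (Pi : X →ₗ[ℝ] Lp ℝ 2 μ)
    (T : X →ₗ[ℝ] Lp ℝ 2 ν)
    (gradD : X →ₗ[ℝ] Lp (EuclideanSpace ℝ (Fin d)) 2 μ)
    (hgradD : Function.Injective gradD)
    (hT₁ : ∀ v : X, ∀ᵐ x ∂ν, x ∈ Γ₁ → (T v) x = 0)
    (Λ : Ω → Matrix (Fin d) (Fin d) ℝ) (hΛmeas : Measurable fun x i j => Λ x i j)
    (lamlo lamhi : ℝ) (hlamlo : 0 < lamlo) (hlam : lamlo ≤ lamhi)
    (hΛ : ∀ᵐ x ∂μ, (Λ x).IsSymm ∧ ∀ ξ : EuclideanSpace ℝ (Fin d),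
        lamlo * ‖ξ‖ ^ 2 ≤ (inner ℝ (Matrix.toEuclideanLin (Λ x) ξ) ξ : ℝ) ∧
        (inner ℝ (Matrix.toEuclideanLin (Λ x) ξ) ξ : ℝ) ≤ lamhi * ‖ξ‖ ^ 2)
    (f uBar : Lp ℝ 2 μ) (G : Lp (EuclideanSpace ℝ (Fin d)) 2 μ)
    (a b phi : Lp ℝ 2 ν)
    (hsig : ∀ᵐ x ∂ν, (x ∈ Γ₁ → b x = 0) ∧ (x ∈ Γ₂ → phi x = 0) ∧
        (x ∈ Γ₃ → b x ≤ a x ∧ phi x ≤ 0 ∧ phi x * (a x - b x) = 0))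
    (KD : Set X)
    (hKD : KD = {v : X | ∀ᵐ x ∂ν, x ∈ Γ₃ → (T v) x ≤ a x})
    (hKDne : KD.Nonempty)
    (u : X) (hu : u ∈ KD)
    (hscheme : ∀ v ∈ KD,
      ∫ x, (inner ℝ (Matrix.toEuclideanLin (Λ x) ((gradD u) x)) ((gradD (u - v)) x) : ℝ) ∂μ
        ≤ ∫ x, (f x) * ((Pi (u - v)) x) ∂μ)
    (vD : X) (hvD : vD ∈ KD)
    (CD : ℝ) (hCD : CD = ⨆ v : {v : X // v ≠ 0}, (‖Pi v.1‖ + ‖T v.1‖) / ‖gradD v.1‖) :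
    ‖Pi u - uBar‖ ≤
      CD * Real.sqrt ((2 / lamlo) * max 0 (∫ y, phi y * ((T vD) y - b y) ∂ν))
        + (1 / lamlo) *
          (CD * (⨆ v : {v : X // v ≠ 0},
                |(∫ x, ((inner ℝ ((gradD v.1) x) (Matrix.toEuclideanLin (Λ x) (G x)) : ℝ)
                      - (Pi v.1) x * f x) ∂μ)
                  - ∫ y, phi y * (T v.1) y ∂ν| / ‖gradD v.1‖)
            + (CD * lamhi + lamlo) * (‖Pi vD - uBar‖ + ‖gradD vD - G‖)) := by
  classical
  have hlamhi0 : (0:ℝ) ≤ lamhi := le_trans hlamlo.le hlam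
  -- a.e. facts about the matrix field
  have hΛae : ∀ᵐ x ∂μ, (∀ ξ η : EuclideanSpace ℝ (Fin d),
        |(inner ℝ (Matrix.toEuclideanLin (Λ x) ξ) η : ℝ)| ≤ lamhi * ‖ξ‖ * ‖η‖)
      ∧ (∀ ξ : EuclideanSpace ℝ (Fin d),
        lamlo * ‖ξ‖^2 ≤ (inner ℝ (Matrix.toEuclideanLin (Λ x) ξ) ξ : ℝ))
      ∧ (∀ ξ η : EuclideanSpace ℝ (Fin d),
        (inner ℝ (Matrix.toEuclideanLin (Λ x) ξ) η : ℝ)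
          = inner ℝ ξ (Matrix.toEuclideanLin (Λ x) η)) := by
    filter_upwards [hΛ] with x hx
    obtain ⟨hsymm, hbound⟩ := hx
    have hs := aux_symm hsymm
    exact ⟨fun ξ η => aux_cs _ hs hlamhi0
        (fun ζ => le_trans (by positivity) (hbound ζ).1) (fun ζ => (hbound ζ).2) ξ η,
      fun ξ => (hbound ξ).1, fun ξ η => hs ξ η⟩
  have hCSae : ∀ᵐ x ∂μ, ∀ ξ η : EuclideanSpace ℝ (Fin d),
      |(inner ℝ (Matrix.toEuclideanLin (Λ x) ξ) η : ℝ)| ≤ lamhi * ‖ξ‖ * ‖η‖ :=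
    hΛae.mono fun x hx => hx.1
  -- the Λ-weighted pairing
  set Bf : Lp (EuclideanSpace ℝ (Fin d)) 2 μ → Lp (EuclideanSpace ℝ (Fin d)) 2 μ → ℝ :=
    fun F Z => ∫ x, (inner ℝ (Matrix.toEuclideanLin (Λ x) (F x)) (Z x) : ℝ) ∂μ with hBf
  have hBint : ∀ F Z : Lp (EuclideanSpace ℝ (Fin d)) 2 μ,
      Integrable (fun x => (inner ℝ (Matrix.toEuclideanLin (Λ x) (F x)) (Z x) : ℝ)) μ :=
    fun F Z => aux_int hΛmeas hCSae F Z
  have hBabs : ∀ F Z, |Bf F Z| ≤ lamhi * ‖F‖ * ‖Z‖ := by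
    intro F Z
    have h1 : |Bf F Z| ≤ ∫ x, |(inner ℝ (Matrix.toEuclideanLin (Λ x) (F x)) (Z x) : ℝ)| ∂μ := by
      have h0 := norm_integral_le_integral_norm
        (fun x => (inner ℝ (Matrix.toEuclideanLin (Λ x) (F x)) (Z x) : ℝ)) (μ := μ)
      simpa [Real.norm_eq_abs, hBf] using h0
    have h2 : ∫ x, |(inner ℝ (Matrix.toEuclideanLin (Λ x) (F x)) (Z x) : ℝ)| ∂μ
        ≤ ∫ x, lamhi * (‖F x‖ * ‖Z x‖) ∂μ := by
      refine integral_mono_ae (hBint F Z).abs ((aux_holder F Z).1.const_mul lamhi) ?_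
      filter_upwards [hCSae] with x hx
      calc |(inner ℝ (Matrix.toEuclideanLin (Λ x) (F x)) (Z x) : ℝ)|
          ≤ lamhi * ‖F x‖ * ‖Z x‖ := hx _ _
        _ = lamhi * (‖F x‖ * ‖Z x‖) := mul_assoc _ _ _
    have h3 : ∫ x, lamhi * (‖F x‖ * ‖Z x‖) ∂μ ≤ lamhi * (‖F‖ * ‖Z‖) := by
      rw [integral_const_mul]
      exact mul_le_mul_of_nonneg_left (aux_holder F Z).2 hlamhi0
    calc |Bf F Z| ≤ ∫ x, |(inner ℝ (Matrix.toEuclideanLin (Λ x) (F x)) (Z x) : ℝ)| ∂μ := h1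
      _ ≤ ∫ x, lamhi * (‖F x‖ * ‖Z x‖) ∂μ := h2
      _ ≤ lamhi * (‖F‖ * ‖Z‖) := h3
      _ = lamhi * ‖F‖ * ‖Z‖ := (mul_assoc _ _ _).symm
  have hBle : ∀ F Z, Bf F Z ≤ lamhi * ‖F‖ * ‖Z‖ := fun F Z => (le_abs_self _).trans (hBabs F Z)
  have hBlower : ∀ F, lamlo * ‖F‖^2 ≤ Bf F F := by
    intro F
    have hint1 : Integrable (fun x => lamlo * ‖F x‖^2) μ := by
      refine ((aux_holder F F).1.const_mul lamlo).congr ?_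
      filter_upwards with x
      rw [← sq]
    have hle : (fun x => lamlo * ‖F x‖^2)
        ≤ᵐ[μ] fun x => (inner ℝ (Matrix.toEuclideanLin (Λ x) (F x)) (F x) : ℝ) := by
      filter_upwards [hΛae] with x hx using hx.2.1 (F x)
    calc lamlo * ‖F‖^2 = ∫ x, lamlo * ‖F x‖^2 ∂μ := by rw [integral_const_mul, aux_normsq]
      _ ≤ Bf F F := integral_mono_ae hint1 (hBint F F) hle
  have hBsymm : ∀ F Z, Bf F Z = Bf Z F := by
    intro F Z
    simp only [hBf]
    apply integral_congr_ae
    filter_upwards [hΛae] with x hx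
    rw [hx.2.2 (F x) (Z x), real_inner_comm]
  have hBsub1 : ∀ F₁ F₂ Z, Bf (F₁ - F₂) Z = Bf F₁ Z - Bf F₂ Z := by
    intro F₁ F₂ Z
    simp only [hBf]
    rw [← integral_sub (hBint F₁ Z) (hBint F₂ Z)]
    apply integral_congr_ae
    filter_upwards [Lp.coeFn_sub F₁ F₂] with x hx
    rw [hx]
    simp [_root_.map_sub, inner_sub_left]
  have hBsub2 : ∀ F Z₁ Z₂, Bf F (Z₁ - Z₂) = Bf F Z₁ - Bf F Z₂ := by
    intro F Z₁ Z₂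
    simp only [hBf]
    rw [← integral_sub (hBint F Z₁) (hBint F Z₂)]
    apply integral_congr_ae
    filter_upwards [Lp.coeFn_sub Z₁ Z₂] with x hx
    rw [hx]
    simp [inner_sub_right]
  -- coercivity
  obtain ⟨vnz, hvnz⟩ := exists_ne (0 : X)
  haveI : Nonempty {v : X // v ≠ 0} := ⟨⟨vnz, hvnz⟩⟩
  have hgradpos : ∀ v : X, v ≠ 0 → 0 < ‖gradD v‖ := by
    intro v hv
    rw [norm_pos_iff]
    intro h0
    exact hv (hgradD (by rw [h0, map_zero]))
  obtain ⟨C0, hC0⟩ : ∃ C0 : ℝ, ∀ v : X, ‖Pi v‖ + ‖T v‖ ≤ C0 * ‖gradD v‖ := by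
    set e := LinearEquiv.ofInjective gradD hgradD with he
    haveI : FiniteDimensional ℝ (LinearMap.range gradD) :=
      LinearEquiv.finiteDimensional (V := X) (V₂ := LinearMap.range gradD) e
    set L1 := LinearMap.toContinuousLinearMap (Pi.comp e.symm.toLinearMap) with hL1
    set L2 := LinearMap.toContinuousLinearMap (T.comp e.symm.toLinearMap) with hL2
    refine ⟨‖L1‖ + ‖L2‖, fun v => ?_⟩
    have hnorm : ‖e v‖ = ‖gradD v‖ := by
      rw [he]
      rfl
    have h1 : Pi v = L1 (e v) := by
      rw [hL1]
      simp [LinearMap.coe_toContinuousLinearMap']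
    have h2 : T v = L2 (e v) := by
      rw [hL2]
      simp [LinearMap.coe_toContinuousLinearMap']
    have b1 := (L1.le_opNorm (e v)).trans_eq (by rw [hnorm])
    have b2 := (L2.le_opNorm (e v)).trans_eq (by rw [hnorm])
    rw [h1, h2]
    nlinarith [norm_nonneg (gradD v), norm_nonneg L1, norm_nonneg L2]
  have hbddCD : BddAbove (Set.range fun v : {v : X // v ≠ 0} =>
      (‖Pi v.1‖ + ‖T v.1‖) / ‖gradD v.1‖) := by
    refine ⟨C0, ?_⟩
    rintro _ ⟨v, rfl⟩
    rw [div_le_iff₀ (hgradpos v.1 v.2)]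
    exact hC0 v.1
  have hCDub : ∀ v : X, ‖Pi v‖ ≤ CD * ‖gradD v‖ ∧ ‖T v‖ ≤ CD * ‖gradD v‖ := by
    intro v
    rcases eq_or_ne v 0 with rfl | hv
    · simp
    · have hq : (‖Pi v‖ + ‖T v‖) / ‖gradD v‖ ≤ CD := by
        rw [hCD]
        exact le_ciSup hbddCD ⟨v, hv⟩
      have hp := hgradpos v hv
      rw [div_le_iff₀ hp] at hq
      constructor <;> nlinarith [norm_nonneg (Pi v), norm_nonneg (T v)]
  have hCD0 : 0 ≤ CD := by
    have h1 : (0:ℝ) ≤ (‖Pi vnz‖ + ‖T vnz‖) / ‖gradD vnz‖ := by positivity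
    have h2 : (‖Pi vnz‖ + ‖T vnz‖) / ‖gradD vnz‖ ≤ CD := by
      rw [hCD]
      exact le_ciSup hbddCD ⟨vnz, hvnz⟩
    linarith
  -- numerator splitting
  have hnum : ∀ v : X,
      (∫ x, ((inner ℝ ((gradD v) x) (Matrix.toEuclideanLin (Λ x) (G x)) : ℝ)
          - (Pi v) x * f x) ∂μ)
      = Bf G (gradD v) - ∫ x, (Pi v) x * f x ∂μ := by
    intro v
    have hinteq : (fun x => (inner ℝ ((gradD v) x) (Matrix.toEuclideanLin (Λ x) (G x)) : ℝ))
        =ᵐ[μ] fun x => (inner ℝ (Matrix.toEuclideanLin (Λ x) (G x)) ((gradD v) x) : ℝ) :=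
      Filter.Eventually.of_forall fun x => real_inner_comm _ _
    have h1 : Integrable (fun x => (inner ℝ ((gradD v) x)
        (Matrix.toEuclideanLin (Λ x) (G x)) : ℝ)) μ := (hBint G (gradD v)).congr hinteq.symm
    rw [integral_sub h1 (aux_mulint (Pi v) f), integral_congr_ae hinteq]
  set WW := ⨆ v : {v : X // v ≠ 0},
      |(∫ x, ((inner ℝ ((gradD v.1) x) (Matrix.toEuclideanLin (Λ x) (G x)) : ℝ)
            - (Pi v.1) x * f x) ∂μ)
        - ∫ y, phi y * (T v.1) y ∂ν| / ‖gradD v.1‖ with hWWdef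
  have hbddWW : BddAbove (Set.range fun v : {v : X // v ≠ 0} =>
      |(∫ x, ((inner ℝ ((gradD v.1) x) (Matrix.toEuclideanLin (Λ x) (G x)) : ℝ)
            - (Pi v.1) x * f x) ∂μ)
        - ∫ y, phi y * (T v.1) y ∂ν| / ‖gradD v.1‖) := by
    refine ⟨lamhi * ‖G‖ + CD * ‖f‖ + CD * ‖phi‖, ?_⟩
    rintro _ ⟨v, rfl⟩
    rw [div_le_iff₀ (hgradpos v.1 v.2), hnum v.1]
    have hA := hBabs G (gradD v.1)
    have hB := (aux_mulbound (Pi v.1) f).trans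
      (mul_le_mul_of_nonneg_right (hCDub v.1).1 (norm_nonneg f))
    have hC := (aux_mulbound phi (T v.1)).trans
      (mul_le_mul_of_nonneg_left (hCDub v.1).2 (norm_nonneg phi))
    have htri : |Bf G (gradD v.1) - (∫ x, (Pi v.1) x * f x ∂μ) - ∫ y, phi y * (T v.1) y ∂ν|
        ≤ |Bf G (gradD v.1)| + |∫ x, (Pi v.1) x * f x ∂μ| + |∫ y, phi y * (T v.1) y ∂ν| :=
      (abs_sub _ _).trans (add_le_add_left (abs_sub _ _) _)
    nlinarith [norm_nonneg (gradD v.1)]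
  have hWWub : ∀ v : X, v ≠ 0 →
      |(∫ x, ((inner ℝ ((gradD v) x) (Matrix.toEuclideanLin (Λ x) (G x)) : ℝ)
          - (Pi v) x * f x) ∂μ)
        - ∫ y, phi y * (T v) y ∂ν| ≤ WW * ‖gradD v‖ := by
    intro v hv
    have h := le_ciSup hbddWW ⟨v, hv⟩
    rw [← hWWdef, div_le_iff₀ (hgradpos v hv)] at h
    exact h
  have hWW0 : 0 ≤ WW := by
    have h := le_ciSup hbddWW ⟨vnz, hvnz⟩
    rw [← hWWdef] at h
    exact le_trans (by positivity) h
  -- boundary term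
  rw [hKD, Set.mem_setOf_eq] at hu
  have hsign : 0 ≤ ∫ y, phi y * ((T u) y - b y) ∂ν := by
    apply integral_nonneg_of_ae
    filter_upwards [hsig, hT₁ u, hu] with y hy h1 h3
    simp only [_root_.Pi.zero_apply]
    have hmem : y ∈ Γ₁ ∪ Γ₂ ∪ Γ₃ := by rw [hΓunion]; trivial
    rcases hmem with (h | h) | h
    · rw [h1 h, hy.1 h]
      simp
    · rw [hy.2.1 h]
      simp
    · obtain ⟨hba, hphile, hcomp⟩ := hy.2.2 h
      have h4 := h3 h
      nlinarith [mul_nonneg (neg_nonneg.mpr hphile) (sub_nonneg.mpr h4)]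
  have hphib : ∀ w : Lp ℝ 2 ν, Integrable (fun y => phi y * (w y - b y)) ν := by
    intro w
    exact ((aux_mulint phi w).sub (aux_mulint phi b)).congr
      (Filter.Eventually.of_forall fun y => (mul_sub _ _ _).symm)
  have hTsplit : ∫ y, phi y * (T (u - vD)) y ∂ν
      = (∫ y, phi y * ((T u) y - b y) ∂ν) - ∫ y, phi y * ((T vD) y - b y) ∂ν := by
    rw [← integral_sub (hphib (T u)) (hphib (T vD))]
    apply integral_congr_ae
    have h1 : T (u - vD) = T u - T vD := map_sub T u vD
    rw [h1]
    filter_upwards [Lp.coeFn_sub (T u) (T vD)] with y hy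
    rw [hy]
    simp only [_root_.Pi.sub_apply]
    ring
  set GP := max 0 (∫ y, phi y * ((T vD) y - b y) ∂ν) with hGPdef
  have hGP0 : 0 ≤ GP := le_max_left _ _
  have hP3 : -∫ y, phi y * (T (u - vD)) y ∂ν ≤ GP := by
    rw [hTsplit]
    have h2 := le_max_right 0 (∫ y, phi y * ((T vD) y - b y) ∂ν)
    rw [← hGPdef] at h2
    linarith
  -- main energy chain
  have hchain : lamlo * ‖gradD (u - vD)‖^2
      ≤ (WW + lamhi * ‖gradD vD - G‖) * ‖gradD (u - vD)‖ + GP := by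
    rcases eq_or_ne (u - vD) 0 with h0 | hne
    · rw [h0, map_zero, norm_zero]
      simpa using hGP0
    · have h1 : lamlo * ‖gradD (u - vD)‖^2 ≤ Bf (gradD (u - vD)) (gradD (u - vD)) :=
        hBlower _
      have h2 : Bf (gradD (u - vD)) (gradD (u - vD))
          = Bf (gradD u) (gradD (u - vD)) - Bf (gradD vD) (gradD (u - vD)) := by
        rw [← hBsub1, ← map_sub]
      have h3 : Bf (gradD u) (gradD (u - vD)) ≤ ∫ x, (Pi (u - vD)) x * f x ∂μ := by
        refine le_trans (hscheme vD hvD) (le_of_eq ?_)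
        exact integral_congr_ae (Filter.Eventually.of_forall fun x => mul_comm _ _)
      have h4 := hWWub (u - vD) hne
      rw [hnum (u - vD)] at h4
      have h4' := (abs_le.mp h4).1
      have h6 : Bf G (gradD (u - vD)) - Bf (gradD vD) (gradD (u - vD))
          ≤ lamhi * ‖gradD vD - G‖ * ‖gradD (u - vD)‖ := by
        have heq : Bf G (gradD (u - vD)) - Bf (gradD vD) (gradD (u - vD))
            = Bf (G - gradD vD) (gradD (u - vD)) := (hBsub1 G (gradD vD) _).symm
        rw [heq]
        have hb := hBle (G - gradD vD) (gradD (u - vD))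
        rwa [norm_sub_rev] at hb
      nlinarith [hP3]
  -- solve the quadratic inequality
  have hkey : ‖gradD (u - vD)‖ ≤ (WW + lamhi * ‖gradD vD - G‖) / lamlo
      + Real.sqrt (GP / lamlo) := by
    set N := ‖gradD (u - vD)‖ with hNdef
    set A := WW + lamhi * ‖gradD vD - G‖ with hAdef
    have hA0 : 0 ≤ A := by
      rw [hAdef]
      exact add_nonneg hWW0 (mul_nonneg hlamhi0 (norm_nonneg _))
    have hN0 : 0 ≤ N := norm_nonneg _
    set s := Real.sqrt (GP / lamlo) with hsdef
    have hs0 : 0 ≤ s := Real.sqrt_nonneg _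
    have hs2 : lamlo * s^2 = GP := by
      rw [hsdef, Real.sq_sqrt (by positivity)]
      field_simp
    have hmul : lamlo * N ≤ A + lamlo * s := by
      by_contra hcon
      push_neg at hcon
      have hsN : s < N := by nlinarith
      have hNs : (0:ℝ) < N + s := by linarith
      have h1 : A < lamlo * (N - s) := by nlinarith
      have h4 : A * (N + s) < lamlo * (N - s) * (N + s) :=
        mul_lt_mul_of_pos_right h1 hNs
      have h3 : lamlo * (N - s) * (N + s) = lamlo * N^2 - lamlo * s^2 := by ring
      nlinarith [mul_nonneg hA0 hs0]
    calc N = lamlo * N / lamlo := by field_simp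
      _ ≤ (A + lamlo * s) / lamlo := by gcongr
      _ = A / lamlo + s := by
          field_simp
  have hPiu : ‖Pi u - uBar‖ ≤ CD * ‖gradD (u - vD)‖ + ‖Pi vD - uBar‖ := by
    have h1 : Pi u - uBar = Pi (u - vD) + (Pi vD - uBar) := by
      rw [map_sub]
      abel
    rw [h1]
    exact (norm_add_le _ _).trans (add_le_add_left (hCDub (u - vD)).1 _)
  have hsqrt : Real.sqrt (GP / lamlo) ≤ Real.sqrt ((2 / lamlo) * GP) := by
    apply Real.sqrt_le_sqrt
    have h1 : 2 / lamlo * GP = 2 * (GP / lamlo) := by ring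
    rw [h1]
    linarith [div_nonneg hGP0 hlamlo.le]
  set SP := ‖Pi vD - uBar‖ with hSPdef
  set S2 := ‖gradD vD - G‖ with hS2def
  have hS20 : (0:ℝ) ≤ S2 := norm_nonneg _
  have hSP0 : (0:ℝ) ≤ SP := norm_nonneg _
  have hfrac : CD * ((WW + lamhi * S2) / lamlo) + SP
      ≤ (1 / lamlo) * (CD * WW + (CD * lamhi + lamlo) * (SP + S2)) := by
    have hineq : CD * (WW + lamhi * S2) + lamlo * SP
        ≤ CD * WW + (CD * lamhi + lamlo) * (SP + S2) := by
      nlinarith [mul_nonneg (mul_nonneg hCD0 hlamhi0) hSP0, mul_nonneg hlamlo.le hS20]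
    have h := mul_le_mul_of_nonneg_right hineq (le_of_lt (by positivity : (0:ℝ) < 1/lamlo))
    calc CD * ((WW + lamhi * S2) / lamlo) + SP
        = (CD * (WW + lamhi * S2) + lamlo * SP) * (1/lamlo) := by
          field_simp
      _ ≤ (CD * WW + (CD * lamhi + lamlo) * (SP + S2)) * (1/lamlo) := h
      _ = (1/lamlo) * (CD * WW + (CD * lamhi + lamlo) * (SP + S2)) := by ring
  calc ‖Pi u - uBar‖ ≤ CD * ‖gradD (u - vD)‖ + SP := hPiu
    _ ≤ CD * ((WW + lamhi * S2) / lamlo + Real.sqrt (GP / lamlo)) + SP :=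
        add_le_add_left (mul_le_mul_of_nonneg_left hkey hCD0) _
    _ = CD * Real.sqrt (GP / lamlo) + (CD * ((WW + lamhi * S2) / lamlo) + SP) := by ring
    _ ≤ CD * Real.sqrt ((2 / lamlo) * GP)
        + (1 / lamlo) * (CD * WW + (CD * lamhi + lamlo) * (SP + S2)) := by
        have h2 := mul_le_mul_of_nonneg_left hsqrt hCD0
        linarith [hfrac]
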